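/- arXiv:2110.11141 — 2 statements merged into one kernel-verified Lean document; each statement's English description precedes it below -/
import Mathlib

section
/- With notation as in the POD construction (Gram matrix C of snapshots w⁽¹⁾,…,w⁽ᴺˢ⁾, eigenpairs (λᵢ, vⁱ) with orthonormal vⁱ and λ₁ ≥ … ≥ λ_{Nₛ}, POD basis ξᵢ for λᵢ > 0, and Π_N the orthogonal projection onto span{ξ₁,…,ξ_N}), the mean squared truncation error satisfies (1/Nₛ) Σᵢ₌₁^{Nₛ} ‖w⁽ⁱ⁾ − Π_N w⁽ⁱ⁾‖² = Σ_{j=N+1}^{Nₛ} λⱼ. -/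
open Finset

theorem stmt_9 {H : Type*} [NormedAddCommGroup H] [InnerProductSpace ℝ H] {Ns : ℕ}
    (w : Fin Ns → H) (C : Matrix (Fin Ns) (Fin Ns) ℝ)
    (hC : ∀ i j, C i j = (1 / (Ns : ℝ)) * (inner ℝ (w i) (w j) : ℝ))
    (lam : Fin Ns → ℝ) (v : Fin Ns → Fin Ns → ℝ)
    (heig : ∀ i, C.mulVec (v i) = lam i • v i)
    (horth : ∀ i j, (∑ k, v i k * v j k) = if i = j then (1 : ℝ) else 0)
    (hsort : ∀ i j : Fin Ns, i ≤ j → lam j ≤ lam i)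
    (ξ : Fin Ns → H)
    (hξ : ∀ i, ξ i = (Real.sqrt (lam i * Ns))⁻¹ • ∑ j, v i j • w j)
    (N : ℕ) (hpos : ∀ j : Fin Ns, (j : ℕ) < N → 0 < lam j) :
    (1 / (Ns : ℝ)) * ∑ i, ‖w i - ∑ j ∈ Finset.univ.filter (fun j : Fin Ns => (j : ℕ) < N),
        (inner ℝ (w i) (ξ j) : ℝ) • ξ j‖ ^ 2
      = ∑ j ∈ Finset.univ.filter (fun j : Fin Ns => N ≤ (j : ℕ)), lam j := by
  classical
  rcases Nat.eq_zero_or_pos Ns with h0 | hNs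
  · subst h0; simp
  have hNsR : (0:ℝ) < Ns := by exact_mod_cast hNs
  set S : Finset (Fin Ns) := Finset.univ.filter (fun j : Fin Ns => (j:ℕ) < N) with hS
  have hww : ∀ i j, (inner ℝ (w i) (w j) : ℝ) = Ns * C i j := by
    intro i j; rw [hC i j]; field_simp
  have hmul : ∀ j i, ∑ k, C i k * v j k = lam j * v j i := by
    intro j i
    have := congrFun (heig j) i
    simpa [Matrix.mulVec, dotProduct] using this
  have hlampos : ∀ j ∈ S, 0 < lam j := by
    intro j hj; exact hpos j (by simpa [hS] using hj)
  have hsqpos : ∀ j ∈ S, 0 < Real.sqrt (lam j * Ns) := by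
    intro j hj
    exact Real.sqrt_pos.2 (mul_pos (hlampos j hj) hNsR)
  have hsq : ∀ j ∈ S, Real.sqrt (lam j * Ns) * Real.sqrt (lam j * Ns) = lam j * Ns := by
    intro j hj
    exact Real.mul_self_sqrt (le_of_lt (mul_pos (hlampos j hj) hNsR))
  have hcw : ∀ i, ∀ j ∈ S, (inner ℝ (w i) (ξ j) : ℝ) = Real.sqrt (lam j * Ns) * v j i := by
    intro i j hj
    rw [hξ j, real_inner_smul_right, inner_sum]
    simp only [real_inner_smul_right]
    have h1 : ∑ k, v j k * (inner ℝ (w i) (w k):ℝ) = Ns * (lam j * v j i) := by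
      calc ∑ k, v j k * (inner ℝ (w i) (w k):ℝ) = ∑ k, Ns * (C i k * v j k) := by
            apply Finset.sum_congr rfl; intro k _; rw [hww i k]; ring
        _ = Ns * ∑ k, C i k * v j k := by rw [← Finset.mul_sum]
        _ = Ns * (lam j * v j i) := by rw [hmul j i]
    rw [h1]
    have h2 := hsq j hj
    have h3 := (hsqpos j hj).ne'
    have h4 : (Ns:ℝ) * (lam j * v j i)
        = Real.sqrt (lam j * Ns) * (Real.sqrt (lam j * Ns) * v j i) := by
      linear_combination (-(v j i)) * h2
    rw [h4, inv_mul_cancel_left₀ h3]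
  have hxx : ∀ j ∈ S, ∀ l ∈ S, (inner ℝ (ξ j) (ξ l):ℝ) = if j = l then (1:ℝ) else 0 := by
    intro j hj l hl
    rw [hξ j, real_inner_smul_left, sum_inner]
    simp only [real_inner_smul_left]
    have h1 : ∑ k, v j k * (inner ℝ (w k) (ξ l):ℝ)
        = Real.sqrt (lam l * Ns) * (if j = l then (1:ℝ) else 0) := by
      calc ∑ k, v j k * (inner ℝ (w k) (ξ l):ℝ)
          = ∑ k, Real.sqrt (lam l * Ns) * (v j k * v l k) := by
            apply Finset.sum_congr rfl; intro k _; rw [hcw k l hl]; ring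
        _ = Real.sqrt (lam l * Ns) * ∑ k, v j k * v l k := by rw [← Finset.mul_sum]
        _ = _ := by rw [horth j l]
    rw [h1]
    by_cases hjl : j = l
    · subst hjl
      rw [if_pos rfl, mul_one, inv_mul_cancel₀ (hsqpos j hj).ne']
    · simp [hjl]
  have hterm : ∀ i, ‖w i - ∑ j ∈ S, (inner ℝ (w i) (ξ j):ℝ) • ξ j‖^2
      = ‖w i‖^2 - ∑ j ∈ S, ((inner ℝ (w i) (ξ j):ℝ))^2 := by
    intro i
    rw [norm_sub_sq_real]
    have hb1 : (inner ℝ (w i) (∑ j ∈ S, (inner ℝ (w i) (ξ j):ℝ) • ξ j) : ℝ)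
        = ∑ j ∈ S, ((inner ℝ (w i) (ξ j):ℝ))^2 := by
      rw [inner_sum]
      apply Finset.sum_congr rfl; intro j hj
      rw [real_inner_smul_right]; ring
    have hb2 : ‖∑ j ∈ S, (inner ℝ (w i) (ξ j):ℝ) • ξ j‖^2
        = ∑ j ∈ S, ((inner ℝ (w i) (ξ j):ℝ))^2 := by
      rw [← real_inner_self_eq_norm_sq, sum_inner]
      apply Finset.sum_congr rfl; intro j hj
      rw [real_inner_smul_left, inner_sum]
      simp only [real_inner_smul_right]
      have h5 : ∑ l ∈ S, (inner ℝ (w i) (ξ l):ℝ) * (inner ℝ (ξ j) (ξ l):ℝ)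
          = (inner ℝ (w i) (ξ j):ℝ) := by
        rw [Finset.sum_eq_single j
          (fun l hl hlj => by rw [hxx j hj l hl, if_neg (Ne.symm hlj), mul_zero])
          (fun h => absurd hj h)]
        rw [hxx j hj j hj, if_pos rfl, mul_one]
      rw [h5]; ring
    rw [hb1, hb2]; ring
  have hnormw : ∀ i, ‖w i‖^2 = Ns * C i i := by
    intro i
    rw [← real_inner_self_eq_norm_sq, hww i i]
  have hc2 : ∀ i, ∀ j ∈ S, ((inner ℝ (w i) (ξ j):ℝ))^2 = lam j * Ns * (v j i)^2 := by
    intro i j hj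
    rw [hcw i j hj]
    have := hsq j hj
    nlinarith [this]
  have hVV : ∀ i k : Fin Ns, ∑ j, v j i * v j k = if i = k then (1:ℝ) else 0 := by
    intro i k
    have h1 : (Matrix.of v * (Matrix.of v).transpose : Matrix (Fin Ns) (Fin Ns) ℝ) = 1 := by
      ext a b
      simp [Matrix.mul_apply, Matrix.one_apply, horth a b]
    have h2 : ((Matrix.of v).transpose * Matrix.of v : Matrix (Fin Ns) (Fin Ns) ℝ) = 1 :=
      mul_eq_one_comm.1 h1
    have := congrFun (congrFun h2 i) k
    simpa [Matrix.mul_apply, Matrix.one_apply, Matrix.transpose_apply] using this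
  have htr : ∑ j, lam j = ∑ i, C i i := by
    calc ∑ j, lam j = ∑ j, lam j * (∑ k, v j k * v j k) := by
          apply Finset.sum_congr rfl; intro j _; rw [horth j j]; simp
      _ = ∑ j, ∑ k, (lam j * v j k) * v j k := by
          apply Finset.sum_congr rfl; intro j _; rw [Finset.mul_sum]
          apply Finset.sum_congr rfl; intro k _; ring
      _ = ∑ j, ∑ k, (∑ l, C k l * v j l) * v j k := by
          apply Finset.sum_congr rfl; intro j _
          apply Finset.sum_congr rfl; intro k _
          rw [hmul j k]
      _ = ∑ k, ∑ l, C k l * ∑ j, v j l * v j k := by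
          rw [Finset.sum_comm]
          apply Finset.sum_congr rfl; intro k _
          calc ∑ j, (∑ l, C k l * v j l) * v j k
              = ∑ j, ∑ l, C k l * v j l * v j k := by
                apply Finset.sum_congr rfl; intro j _; rw [Finset.sum_mul]
            _ = ∑ l, ∑ j, C k l * v j l * v j k := Finset.sum_comm
            _ = ∑ l, C k l * ∑ j, v j l * v j k := by
                apply Finset.sum_congr rfl; intro l _
                rw [Finset.mul_sum]
                apply Finset.sum_congr rfl; intro j _; ring
      _ = ∑ i, C i i := by
          apply Finset.sum_congr rfl; intro k _
          rw [Finset.sum_eq_single k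
            (fun l _ hlk => by rw [hVV l k, if_neg hlk, mul_zero])
            (fun h => absurd (Finset.mem_univ k) h)]
          rw [hVV k k, if_pos rfl, mul_one]
  have hsum : ∑ i, ‖w i - ∑ j ∈ S, (inner ℝ (w i) (ξ j):ℝ) • ξ j‖^2
      = Ns * (∑ i, C i i) - Ns * ∑ j ∈ S, lam j := by
    calc ∑ i, ‖w i - ∑ j ∈ S, (inner ℝ (w i) (ξ j):ℝ) • ξ j‖^2
        = ∑ i, (Ns * C i i - ∑ j ∈ S, lam j * Ns * (v j i)^2) := by
          apply Finset.sum_congr rfl; intro i _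
          rw [hterm i, hnormw i]
          congr 1
          exact Finset.sum_congr rfl (fun j hj => hc2 i j hj)
      _ = Ns * (∑ i, C i i) - ∑ i, ∑ j ∈ S, lam j * Ns * (v j i)^2 := by
          rw [Finset.sum_sub_distrib, Finset.mul_sum]
      _ = Ns * (∑ i, C i i) - Ns * ∑ j ∈ S, lam j := by
          congr 1
          rw [Finset.sum_comm, Finset.mul_sum]
          apply Finset.sum_congr rfl; intro j hj
          have h6 : ∑ i, lam j * Ns * (v j i)^2 = lam j * Ns * ∑ i, v j i * v j i := by
            rw [Finset.mul_sum]; apply Finset.sum_congr rfl; intro i _; ring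
          rw [h6, horth j j, if_pos rfl, mul_one]; ring
  rw [hsum]
  have hpart : ∑ j, lam j
      = ∑ j ∈ S, lam j + ∑ j ∈ Finset.univ.filter (fun j : Fin Ns => N ≤ (j:ℕ)), lam j := by
    rw [hS, ← Finset.sum_filter_add_sum_filter_not Finset.univ (fun j : Fin Ns => (j:ℕ) < N) lam]
    congr 1
    apply Finset.sum_congr _ (fun _ _ => rfl)
    apply Finset.filter_congr
    intro x _
    simp [not_lt]
  have hdiv : (1/(Ns:ℝ)) * (Ns * (∑ i, C i i) - Ns * ∑ j ∈ S, lam j)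
      = (∑ i, C i i) - ∑ j ∈ S, lam j := by
    field_simp
  rw [hdiv, ← htr, hpart]
  ring
end

section
/- Let ℂ be the homogenised elasticity tensor ℂ = ⟨C_μ(E_{kl} + ∇ˢũ^{kl})⟩ ⊗ E_{kl} obtained from the corrector problems with a symmetric, positive-semidefinite microscale tensor C_μ. Then ℂ is symmetric: ℂ E_{ij} · E_{kl} = ℂ E_{kl} · E_{ij} for all unit strains, i.e. C_{ijkl} = C_{klij}. -/
theorem stmt_14 {W : Type*} [AddCommGroup W] [Module ℝ W]
    (c : W →ₗ[ℝ] W →ₗ[ℝ] ℝ) (hcsym : ∀ x y : W, c x y = c y x)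
    (U : Submodule ℝ W)
    (g : W → W) (hg : ∀ e, g e ∈ U)
    (hcorr : ∀ e : W, ∀ v ∈ U, c (e + g e) v = 0) :
    ∀ e f : W, c (e + g e) f = c (f + g f) e := by
  intro e f
  have h1 : c (e + g e) f = c (e + g e) (f + g f) := by
    rw [(c (e + g e)).map_add, hcorr e (g f) (hg f), add_zero]
  have h2 : c (f + g f) e = c (f + g f) (e + g e) := by
    rw [(c (f + g f)).map_add, hcorr f (g e) (hg e), add_zero]
  rw [h1, h2, hcsym]
end
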